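/- Let p > 3 be a prime with p ≡ 3 (mod 4). Then 2^((p-3)/2) divides det[S(p)] (equivalently, the 2-adic valuation of det[S(p)] is at least (p-3)/2). -/
import Mathlib

/-- Any `±1` integer matrix of size `n` has determinant divisible by `2^(n-1)`. -/
lemma det_pm_one_dvd {n : ℕ} (A : Matrix (Fin n) (Fin n) ℤ)
    (h : ∀ i j, A i j = 1 ∨ A i j = -1) : (2 : ℤ) ^ (n - 1) ∣ A.det := by
  rcases n with _ | n
  · simp [Matrix.det_fin_zero]
  set c : Fin (n + 1) → ℤ := fun i => if i = 0 then 0 else 1 with hc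
  set v : Fin (n + 1) → ℤ := fun i => if i = 0 then 1 else 2 with hv
  set D : Matrix (Fin (n + 1)) (Fin (n + 1)) ℤ := Matrix.of fun i j =>
    if i = 0 then A 0 j else (A i j - A 0 j) / 2 with hD
  have key : A.det = Matrix.det (Matrix.of fun i j => v i * D i j) := by
    apply Matrix.det_eq_of_forall_row_eq_smul_add_const c 0 (by simp [hc])
    intro i j
    by_cases hi : i = 0
    · subst hi; simp [hc, hv, hD]
    · simp only [hc, hv, hD, Matrix.of_apply, if_neg hi, one_mul]
      rcases h i j with h1 | h1 <;> rcases h 0 j with h2 | h2 <;>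
        rw [h1, h2] <;> norm_num
  rw [key, Matrix.det_mul_column]
  have hprod : (∏ i : Fin (n + 1), v i) = 2 ^ n := by
    rw [Fin.prod_univ_succ]
    simp [hv, Fin.succ_ne_zero]
  rw [hprod]
  exact Dvd.intro _ rfl

/-- For a prime `p > 3` with `p ≡ 3 (mod 4)`, `2^((p-3)/2)` divides
`det S(p)`, where `S(p)` is the matrix of Legendre symbols `((j²+k²)/p)` for
`1 ≤ j,k ≤ (p-1)/2`. -/
theorem stmt4 (p : ℕ) [hp : Fact p.Prime] (hp3 : 3 < p) (hp4 : p % 4 = 3)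
    (m : ℕ) (hm : m = (p - 1) / 2)
    (S : Matrix (Fin m) (Fin m) ℤ)
    (hS : S = Matrix.of fun (j k : Fin m) =>
      legendreSym p ((((j : ℕ) : ℤ) + 1) ^ 2 + (((k : ℕ) : ℤ) + 1) ^ 2)) :
    (2 : ℤ) ^ ((p - 3) / 2) ∣ S.det := by
  have hpodd : p % 2 = 1 := by omega
  have hmlt : ∀ j : Fin m, (j : ℕ) + 1 < p := by
    intro j
    have := j.2
    omega
  have hent : ∀ j k : Fin m, S j k = 1 ∨ S j k = -1 := by
    intro j k
    rw [hS]
    apply legendreSym.eq_one_or_neg_one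
    intro h0
    push_cast at h0
    set a : ZMod p := ((j : ℕ) : ZMod p) + 1 with ha
    set b : ZMod p := ((k : ℕ) : ZMod p) + 1 with hb
    have hane : a ≠ 0 := by
      intro h
      have : (((j : ℕ) + 1 : ℕ) : ZMod p) = 0 := by push_cast; exact h
      rw [ZMod.natCast_eq_zero_iff] at this
      have := Nat.le_of_dvd (by omega) this
      exact absurd this (by have := hmlt j; omega)
    have hsq : IsSquare (-1 : ZMod p) := by
      refine ⟨b * a⁻¹, ?_⟩
      have hb2 : b ^ 2 = -(a ^ 2) := by linear_combination h0
      have hfield : (b * a⁻¹) * (b * a⁻¹) = (b ^ 2) * (a⁻¹ ^ 2) := by ring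
      rw [hfield, hb2]
      have : a⁻¹ ^ 2 = (a ^ 2)⁻¹ := by rw [inv_pow]
      rw [this, neg_mul, mul_inv_cancel₀ (pow_ne_zero 2 hane)]
    rw [ZMod.exists_sq_eq_neg_one_iff] at hsq
    exact hsq hp4
  have := det_pm_one_dvd S hent
  have heq : (p - 3) / 2 = m - 1 := by omega
  rwa [heq]
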